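/- Let (S, X, p) be a left étale action of an inverse semigroup S, and let S∗X be the associated right generalized inverse ∗-semigroup. For (s,x), (t,y) ∈ S∗X, one has (s,x) ≤ (t,y) in the natural partial order of S∗X if and only if s ≤ t in the natural partial order of S and x ≤ y, where x ≤ y means x = e·y for some idempotent e ∈ E(S). -/
import Mathlib


/-- `t` is a (von Neumann) inverse of `s`. -/
def IsInvOf {S : Type*} [Semigroup S] (t s : S) : Prop :=
  s * t * s = s ∧ t * s * t = t

/-- `e` is an idempotent. -/
def IsIdem {S : Type*} [Semigroup S] (e : S) : Prop := e * e = e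

/-- A right generalized inverse semigroup: every element is regular, the product of
idempotents is idempotent, and idempotents satisfy the right normality law `e*f*g = f*e*g`. -/
structure IsRGIS (S : Type*) [Semigroup S] : Prop where
  regular : ∀ s : S, ∃ t, IsInvOf t s
  idem_mul : ∀ e f : S, IsIdem e → IsIdem f → IsIdem (e * f)
  right_normal : ∀ e f g : S, IsIdem e → IsIdem f → IsIdem g → e * f * g = f * e * g

/-- A right ∗-semigroup structure: axioms (S1)-(S4). -/
structure IsRightStar (S : Type*) [Semigroup S] (star : S → S) : Prop where
  s1 : ∀ s : S, star (star s) = s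
  s2 : ∀ s : S, IsInvOf (star s) s
  s3 : ∀ s t : S, star (s * t) = star t * star (s * t * star t)
  s4 : ∀ e : S, IsIdem e → star e = e

/-- An inverse semigroup: `inv s` is an inverse of `s`, and inverses are unique. -/
structure IsInverseSemigroup (S : Type*) [Semigroup S] (inv : S → S) : Prop where
  inv_spec : ∀ s : S, IsInvOf (inv s) s
  inv_unique : ∀ s t : S, IsInvOf t s → t = inv s

/-- The relation γ : `a γ b` iff `V(a) ∩ V(b) ≠ ∅`. -/
def GammaRel {S : Type*} [Semigroup S] (a b : S) : Prop :=
  ∃ t, IsInvOf t a ∧ IsInvOf t b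

/-- The natural partial order on a regular semigroup. -/
def NatLe {S : Type*} [Semigroup S] (a b : S) : Prop :=
  ∃ e f : S, IsIdem e ∧ IsIdem f ∧ a = e * b ∧ a = b * f

/-- Green's L relation. -/
def GreenL {S : Type*} [Semigroup S] (a b : S) : Prop :=
  a = b ∨ ∃ x y : S, a = x * b ∧ b = y * a

/-- An étale homomorphism: for every idempotent `e` of `T`, `θ` restricts to a bijection
from `T·e` onto `S·θ(e)`. -/
def IsEtaleHom {T S : Type*} [Semigroup T] [Semigroup S] (θ : T → S) : Prop :=
  ∀ e : T, IsIdem e →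
    (∀ a b : T, a * e = a → b * e = b → θ a = θ b → a = b) ∧
    (∀ s : S, s * θ e = s → ∃ a : T, a * e = a ∧ θ a = s)

section SX

variable {S X : Type*} [Semigroup S]

/-- Membership in `S∗X = {(s,x) : s⁻¹s = p(x)}`. -/
def memSX (inv : S → S) (p : X → S) (a : S × X) : Prop :=
  inv a.1 * a.1 = p a.2

/-- The multiplication `(s,x)(t,y) = (st, ((st)⁻¹(st))·y)` on `S∗X`. -/
def mulSX (inv : S → S) (act : S → X → X) (a b : S × X) : S × X :=
  (a.1 * b.1, act (inv (a.1 * b.1) * (a.1 * b.1)) b.2)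

/-- The unary operation `(s,x)∗ = (s⁻¹, s·x)` on `S∗X`. -/
def starSX (inv : S → S) (act : S → X → X) (a : S × X) : S × X :=
  (inv a.1, act a.1 a.2)

end SX


section Aux

variable {S : Type*} [Semigroup S] {inv : S → S}

lemma inv_invol (hS : IsInverseSemigroup S inv) (s : S) : inv (inv s) = s :=
  (hS.inv_unique (inv s) s ⟨(hS.inv_spec s).2, (hS.inv_spec s).1⟩).symm

lemma inv_of_idem (hS : IsInverseSemigroup S inv) {e : S} (he : IsIdem e) : inv e = e :=
  (hS.inv_unique e e ⟨by rw [he, he], by rw [he, he]⟩).symm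

lemma mul_idem_aux (hS : IsInverseSemigroup S inv) {e f : S} (he : IsIdem e) (hf : IsIdem f) :
    IsIdem (e * f) := by
  obtain ⟨h1, h2⟩ := hS.inv_spec (e * f)
  set x := inv (e * f) with hx
  have key : IsInvOf (f * x * e) (e * f) := by
    constructor
    · calc e * f * (f * x * e) * (e * f)
          = e * (f * f) * x * (e * e) * f := by simp only [mul_assoc]
        _ = e * f * x * (e * f) := by rw [he, hf]; simp only [mul_assoc]
        _ = e * f := h1
    · calc f * x * e * (e * f) * (f * x * e)
          = f * x * (e * e) * (f * f) * x * e := by simp only [mul_assoc]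
        _ = f * (x * (e * f) * x) * e := by rw [he, hf]; simp only [mul_assoc]
        _ = f * x * e := by rw [h2]
  have hx_eq : f * x * e = x := hS.inv_unique (e * f) (f * x * e) key
  have hxx : IsIdem x := by
    show x * x = x
    calc x * x = (f * x * e) * (f * x * e) := by rw [hx_eq]
      _ = f * (x * (e * f) * x) * e := by simp only [mul_assoc]
      _ = f * x * e := by rw [h2]
      _ = x := hx_eq
  have hef : e * f = x := by
    calc e * f = inv (inv (e * f)) := (inv_invol hS _).symm
      _ = inv x := by rw [← hx]
      _ = x := inv_of_idem hS hxx
  show (e * f) * (e * f) = e * f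
  rw [hef]; exact hxx

lemma idem_comm (hS : IsInverseSemigroup S inv) {e f : S} (he : IsIdem e) (hf : IsIdem f) :
    e * f = f * e := by
  have hef := mul_idem_aux hS he hf
  have hfe := mul_idem_aux hS hf he
  have h1 : IsInvOf (f * e) (e * f) := by
    constructor
    · calc e * f * (f * e) * (e * f) = e * (f * f) * (e * e) * f := by simp only [mul_assoc]
        _ = e * f * (e * f) := by rw [he, hf]; simp only [mul_assoc]
        _ = e * f := hef
    · calc f * e * (e * f) * (f * e) = f * (e * e) * (f * f) * e := by simp only [mul_assoc]
        _ = f * e * (f * e) := by rw [he, hf]; simp only [mul_assoc]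
        _ = f * e := hfe
  have h2 : IsInvOf (e * f) (e * f) := ⟨by rw [hef, hef], by rw [hef, hef]⟩
  exact (hS.inv_unique _ _ h2).trans (hS.inv_unique _ _ h1).symm

lemma idem_inv_mul_self (hS : IsInverseSemigroup S inv) (s : S) : IsIdem (inv s * s) := by
  have hs := hS.inv_spec s
  show inv s * s * (inv s * s) = inv s * s
  calc inv s * s * (inv s * s) = inv s * (s * inv s * s) := by simp only [mul_assoc]
    _ = inv s * s := by rw [hs.1]

lemma idem_self_mul_inv (hS : IsInverseSemigroup S inv) (s : S) : IsIdem (s * inv s) := by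
  have hs := hS.inv_spec s
  show s * inv s * (s * inv s) = s * inv s
  calc s * inv s * (s * inv s) = (s * inv s * s) * inv s := by simp only [mul_assoc]
    _ = s * inv s := by rw [hs.1]

lemma inv_mul (hS : IsInverseSemigroup S inv) (s t : S) : inv (s * t) = inv t * inv s := by
  have hs := hS.inv_spec s
  have ht := hS.inv_spec t
  have comm : (t * inv t) * (inv s * s) = (inv s * s) * (t * inv t) :=
    idem_comm hS (idem_self_mul_inv hS t) (idem_inv_mul_self hS s)
  refine (hS.inv_unique _ _ ?_).symm
  constructor
  · calc s * t * (inv t * inv s) * (s * t)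
        = s * ((t * inv t) * (inv s * s)) * t := by simp only [mul_assoc]
      _ = s * ((inv s * s) * (t * inv t)) * t := by rw [comm]
      _ = (s * inv s * s) * (t * inv t * t) := by simp only [mul_assoc]
      _ = s * t := by rw [hs.1, ht.1]
  · calc inv t * inv s * (s * t) * (inv t * inv s)
        = inv t * ((inv s * s) * (t * inv t)) * inv s := by simp only [mul_assoc]
      _ = inv t * ((t * inv t) * (inv s * s)) * inv s := by rw [← comm]
      _ = (inv t * t * inv t) * (inv s * s * inv s) := by simp only [mul_assoc]
      _ = inv t * inv s := by rw [ht.2, hs.2]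

lemma le_left (hS : IsInverseSemigroup S inv) {s t e : S} (he : IsIdem e) (h : s = e * t) :
    s * inv s * t = s := by
  have hinv : inv s = inv t * e := by rw [h, inv_mul hS, inv_of_idem hS he]
  have comm : (t * inv t) * e = e * (t * inv t) := idem_comm hS (idem_self_mul_inv hS t) he
  have ht := hS.inv_spec t
  rw [hinv, h]
  calc e * t * (inv t * e) * t = e * ((t * inv t) * e) * t := by simp only [mul_assoc]
    _ = e * (e * (t * inv t)) * t := by rw [comm]
    _ = (e * e) * (t * inv t * t) := by simp only [mul_assoc]
    _ = e * t := by rw [he, ht.1]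

lemma le_right (hS : IsInverseSemigroup S inv) {s t f : S} (hf : IsIdem f) (h : s = t * f) :
    t * (inv s * s) = s := by
  have hinv : inv s = f * inv t := by rw [h, inv_mul hS, inv_of_idem hS hf]
  have comm : f * (inv t * t) = (inv t * t) * f := idem_comm hS hf (idem_inv_mul_self hS t)
  have ht := hS.inv_spec t
  rw [hinv, h]
  calc t * (f * inv t * (t * f)) = t * (f * (inv t * t)) * f := by simp only [mul_assoc]
    _ = t * ((inv t * t) * f) * f := by rw [comm]
    _ = (t * inv t * t) * (f * f) := by simp only [mul_assoc]
    _ = t * f := by rw [ht.1, hf]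

end Aux

/-- Proposition 2.5(2): in `S∗X`, `(s,x) ≤ (t,y)` in the natural partial order if and
only if `s ≤ t` in `S` and `x ≤ y` (i.e. `x = e·y` for some idempotent `e ∈ E(S)`). -/


theorem sx_natural_order {S X : Type*} [Semigroup S]
    (inv : S → S) (hS : IsInverseSemigroup S inv)
    (p : X → S) (act : S → X → X)
    (hp : ∀ x : X, IsIdem (p x))
    (hassoc : ∀ (s t : S) (x : X), act (s * t) x = act s (act t x))
    (he1 : ∀ x : X, act (p x) x = x)
    (he2 : ∀ (s : S) (x : X), p (act s x) = s * p x * inv s)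
    (a b : S × X) (ha : memSX inv p a) (hb : memSX inv p b) :
    (∃ E F : S × X, memSX inv p E ∧ memSX inv p F ∧
        mulSX inv act E E = E ∧ mulSX inv act F F = F ∧
        a = mulSX inv act E b ∧ a = mulSX inv act b F) ↔
      (NatLe a.1 b.1 ∧ ∃ e : S, IsIdem e ∧ a.2 = act e b.2) := by
  obtain ⟨s, x⟩ := a
  obtain ⟨t, y⟩ := b
  have ha' : inv s * s = p x := ha
  have hb' : inv t * t = p y := hb
  constructor
  · rintro ⟨E, F, hE, hF, hEE, hFF, haE, haF⟩
    obtain ⟨e, z⟩ := E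
    obtain ⟨f, w⟩ := F
    simp only [mulSX, Prod.mk.injEq] at hEE hFF haE haF
    have he : IsIdem e := hEE.1
    have hf : IsIdem f := hFF.1
    refine ⟨⟨e, f, he, hf, haE.1, haF.1⟩, inv s * s, idem_inv_mul_self hS s, ?_⟩
    show x = act (inv s * s) y
    rw [haE.2, ← haE.1]
  · rintro ⟨⟨e, f, he, hf, hs1, hs2⟩, g, hg, hx⟩
    have hs1' : s = e * t := hs1
    have hs2' : s = t * f := hs2
    have hx' : x = act g y := hx
    have key : x = act (inv s * s) y := by
      have h1 : p x = g * p y * g := by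
        have h := he2 g y
        rw [inv_of_idem hS hg] at h
        rw [hx']; exact h
      have h2 : p x * g = p x := by
        rw [h1]
        calc g * p y * g * g = g * p y * (g * g) := by rw [mul_assoc]
          _ = g * p y * g := by rw [hg]
      calc x = act (p x) x := (he1 x).symm
        _ = act (p x) (act g y) := by rw [← hx']
        _ = act (p x * g) y := (hassoc _ _ _).symm
        _ = act (p x) y := by rw [h2]
        _ = act (inv s * s) y := by rw [← ha']
    have hs := hS.inv_spec s
    have hss : s * inv s * s = s := hs.1
    have l1 : s * inv s * t = s := le_left hS he hs1'
    have l2 : t * (inv s * s) = s := le_right hS hf hs2'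
    have hie : IsIdem (s * inv s) := idem_self_mul_inv hS s
    have hif : IsIdem (inv s * s) := idem_inv_mul_self hS s
    have hie' : (s * inv s) * (s * inv s) = s * inv s := hie
    have hif' : (inv s * s) * (inv s * s) = inv s * s := hif
    refine ⟨(s * inv s, act s x), (inv s * s, x), ?_, ?_, ?_, ?_, ?_, ?_⟩
    · show inv (s * inv s) * (s * inv s) = p (act s x)
      rw [inv_of_idem hS hie, hie', he2, ← ha']
      calc s * inv s = (s * inv s * s) * inv s := by rw [hss]
        _ = s * (inv s * s) * inv s := by simp only [mul_assoc]
    · show inv (inv s * s) * (inv s * s) = p x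
      rw [inv_of_idem hS hif, hif']; exact ha'
    · show ((s * inv s) * (s * inv s),
          act (inv ((s * inv s) * (s * inv s)) * ((s * inv s) * (s * inv s))) (act s x))
          = (s * inv s, act s x)
      rw [hie', inv_of_idem hS hie, hie', ← hassoc, hss]
    · show ((inv s * s) * (inv s * s),
          act (inv ((inv s * s) * (inv s * s)) * ((inv s * s) * (inv s * s))) x)
          = (inv s * s, x)
      rw [hif', inv_of_idem hS hif, hif', ha', he1]
    · show (s, x) = ((s * inv s) * t, act (inv ((s * inv s) * t) * ((s * inv s) * t)) y)
      have : (s * inv s) * t = s := l1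
      rw [this, key]
    · show (s, x) = (t * (inv s * s), act (inv (t * (inv s * s)) * (t * (inv s * s))) x)
      rw [l2, ha', he1]
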